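/- Let A ∈ ℤ^{m×n} be a totally unimodular matrix, b ∈ ℤ^m, and let x ∈ ℚ^n satisfy A x = b. Let S = {j : x_j ∉ ℤ} be the set of indices where x is non-integral. If S is nonempty, then the submatrix of A consisting of the columns indexed by S has nontrivial kernel (nullity > 0). -/

import Mathlib

open Matrix

/-- From a matrix with linearly independent columns, extract an invertible square
row-submatrix. -/
lemma exists_rows_isUnit {m s : ℕ} (M : Matrix (Fin m) (Fin s) ℚ)
    (h : LinearIndependent ℚ (fun k => Mᵀ k)) :
    ∃ f : Fin s → Fin m, Function.Injective f ∧ IsUnit (M.submatrix f id) := by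
  classical
  have hrank : M.rank = s := by
    have h2 := h.rank_matrix
    rw [← Matrix.rank_transpose M]
    exact h2.trans (Fintype.card_fin s)
  have hspan : Module.finrank ℚ (Submodule.span ℚ (Set.range M)) = s := by
    have h3 := Matrix.rank_eq_finrank_span_row M
    rw [hrank] at h3
    exact h3.symm
  obtain ⟨bset, hsub, hspaneq, hind⟩ := exists_linearIndependent ℚ (Set.range M)
  have hfin : bset.Finite := (Set.finite_range M).subset hsub
  haveI := hfin.fintype
  have hcard : Fintype.card bset = s := by
    have h3 := finrank_span_set_eq_card hind
    rw [hspaneq, hspan, Set.toFinset_card] at h3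
    omega
  let eqv : Fin s ≃ bset := (Fintype.equivFinOfCardEq hcard).symm
  choose idx hidx using fun v : bset => hsub v.2
  refine ⟨fun k => idx (eqv k), ?_, ?_⟩
  · intro k k' hkk'
    have : ((eqv k : Fin s → ℚ)) = eqv k' := by
      rw [← hidx (eqv k), ← hidx (eqv k')]
      exact congrArg M hkk'
    exact eqv.injective (Subtype.ext this)
  · rw [← Matrix.linearIndependent_rows_iff_isUnit]
    have : (fun i => (M.submatrix (fun k => idx (eqv k)) id) i)
        = (Subtype.val : bset → (Fin s → ℚ)) ∘ eqv := by
      funext i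
      ext j
      simpa [Matrix.submatrix_apply] using congrFun (hidx (eqv i)) j
    change LinearIndependent ℚ (fun i => (M.submatrix (fun k => idx (eqv k)) id) i)
    rw [this]
    exact hind.comp eqv eqv.injective

/-- For a totally unimodular integer matrix `A` and integral right-hand side `b`,
any rational solution of `A x = b` is either integral or the columns indexed by its
non-integral support admit a nontrivial kernel element. -/
theorem stmt_2 {m n : ℕ} (A : Matrix (Fin m) (Fin n) ℤ)
    (hA : A.IsTotallyUnimodular) (b : Fin m → ℤ) (x : Fin n → ℚ)
    (hx : (A.map (Int.cast : ℤ → ℚ)).mulVec x = fun i => (b i : ℚ))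
    (hS : {j : Fin n | ¬ ∃ z : ℤ, x j = (z : ℚ)}.Nonempty) :
    ∃ g : Fin n → ℚ, g ≠ 0 ∧ (∀ j, (∃ z : ℤ, x j = (z : ℚ)) → g j = 0) ∧
      (A.map (Int.cast : ℤ → ℚ)).mulVec g = 0 := by
  classical
  set Q : Matrix (Fin m) (Fin n) ℚ := A.map (Int.cast : ℤ → ℚ) with hQ
  set S : Set (Fin n) := {j : Fin n | ¬ ∃ z : ℤ, x j = (z : ℚ)} with hSdef
  haveI : Fintype S := Fintype.ofFinite S
  set s : ℕ := Fintype.card S with hs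
  let e0 : Fin s ≃ S := (Fintype.equivFin S).symm
  let e : Fin s → Fin n := fun k => (e0 k : Fin n)
  have he_inj : Function.Injective e := fun k k' h =>
    e0.injective (Subtype.ext h)
  have he_mem : ∀ k, e k ∈ S := fun k => (e0 k).2
  by_cases hdep : LinearIndependent ℚ (fun k => (Q.submatrix id e)ᵀ k)
  · -- columns independent: derive contradiction
    exfalso
    obtain ⟨f, hf_inj, hunit⟩ := exists_rows_isUnit _ hdep
    have hsub : (Q.submatrix id e).submatrix f id = Q.submatrix f e := by
      rw [Matrix.submatrix_submatrix]; rfl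
    rw [hsub] at hunit
    set B : Matrix (Fin s) (Fin s) ℤ := A.submatrix f e with hB
    have hBq : Q.submatrix f e = B.map (Int.cast : ℤ → ℚ) := by
      rw [hQ, hB]
      ext i j
      simp [Matrix.submatrix_apply, Matrix.map_apply]
    rw [hBq] at hunit
    set d : ℤ := B.det with hd
    have hdq : ((d : ℚ)) ≠ 0 := by
      have h7 : IsUnit (B.map (Int.cast : ℤ → ℚ)).det :=
        (Matrix.isUnit_iff_isUnit_det _).mp hunit
      have h8 : (B.map (Int.cast : ℤ → ℚ)).det = (d : ℚ) :=
        (RingHom.map_det (Int.castRingHom ℚ) B).symm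
      rw [h8] at h7
      exact h7.ne_zero
    have hdd : d * d = 1 := by
      obtain ⟨sg, hsg⟩ := hA s f e hf_inj he_inj
      rw [← hB, ← hd] at hsg
      cases sg with
      | zero => exfalso; apply hdq; rw [← hsg]; simp
      | pos => rw [← hsg]; simp
      | neg => rw [← hsg]; simp
    -- integral values off S
    have hzex : ∀ j : Fin n, ∃ zz : ℤ, j ∉ S → x j = (zz : ℚ) := by
      intro j
      by_cases h : j ∈ S
      · exact ⟨0, fun h' => absurd h h'⟩
      · obtain ⟨zz, hzz⟩ := not_not.mp h
        exact ⟨zz, fun _ => hzz⟩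
    choose z hz using hzex
    set c : Fin s → ℤ :=
      fun i => b (f i) - ∑ j ∈ Finset.univ.filter (fun j => j ∉ S), A (f i) j * z j with hc
    have himg : Finset.univ.filter (fun j => j ∈ S) = Finset.univ.image e := by
      ext j
      simp only [Finset.mem_filter, Finset.mem_univ, true_and, Finset.mem_image]
      constructor
      · intro hj
        exact ⟨e0.symm ⟨j, hj⟩, by simp [e, Equiv.apply_symm_apply]⟩
      · rintro ⟨k, -, rfl⟩
        exact he_mem k
    have hrow : ∀ i : Fin s, ∑ k, (B i k : ℚ) * x (e k) = (c i : ℚ) := by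
      intro i
      have h9 := congrFun hx (f i)
      simp only [Matrix.mulVec, dotProduct, hQ, Matrix.map_apply] at h9
      rw [← Finset.sum_filter_add_sum_filter_not Finset.univ (fun j => j ∈ S)] at h9
      rw [himg, Finset.sum_image (fun a _ b _ h => he_inj h)] at h9
      have h10 : ∑ j ∈ Finset.univ.filter (fun j => ¬ j ∈ S), (A (f i) j : ℚ) * x j
          = ((∑ j ∈ Finset.univ.filter (fun j => ¬ j ∈ S), A (f i) j * z j : ℤ) : ℚ) := by
        push_cast
        refine Finset.sum_congr rfl fun j hj => ?_
        rw [hz j (Finset.mem_filter.mp hj).2]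
      rw [h10] at h9
      rw [hc]
      push_cast
      rw [← h9, hB]
      simp [Matrix.submatrix_apply]
    set w : Fin s → ℤ := B.adjugate.mulVec c with hw
    have hmain : ∀ k, (d : ℚ) * x (e k) = ((w k : ℚ)) := by
      intro k
      have hAdjZ : ∀ j, ∑ i, B.adjugate k i * B i j = if k = j then d else 0 := by
        intro j
        have h11 := congrFun (congrFun (Matrix.adjugate_mul B) k) j
        simpa [Matrix.mul_apply, Matrix.one_apply, mul_ite] using h11
      have hAdjQ : ∀ j, ∑ i, (B.adjugate k i : ℚ) * (B i j : ℚ)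
          = if k = j then (d : ℚ) else 0 := by
        intro j
        have := hAdjZ j
        have h12 := congrArg (Int.cast : ℤ → ℚ) this
        push_cast at h12
        convert h12 using 2
      calc (d : ℚ) * x (e k)
          = ∑ j, (if k = j then (d : ℚ) else 0) * x (e j) := by
            simp [ite_mul]
        _ = ∑ j, (∑ i, (B.adjugate k i : ℚ) * (B i j : ℚ)) * x (e j) :=
            Finset.sum_congr rfl fun j _ => by rw [hAdjQ]
        _ = ∑ i, (B.adjugate k i : ℚ) * ∑ j, (B i j : ℚ) * x (e j) := by
            simp_rw [Finset.sum_mul, Finset.mul_sum, mul_assoc]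
            exact Finset.sum_comm
        _ = ∑ i, (B.adjugate k i : ℚ) * (c i : ℚ) :=
            Finset.sum_congr rfl fun i _ => by rw [hrow i]
        _ = ((w k : ℚ)) := by
            rw [hw]
            simp [Matrix.mulVec, dotProduct]
    obtain ⟨j0, hj0⟩ := hS
    have hj0' : j0 ∈ S := hj0
    apply hj0'
    refine ⟨d * w (e0.symm ⟨j0, hj0'⟩), ?_⟩
    have h13 := hmain (e0.symm ⟨j0, hj0'⟩)
    have he13 : e (e0.symm ⟨j0, hj0'⟩) = j0 := by simp [e, Equiv.apply_symm_apply]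
    rw [he13] at h13
    have hdd' : (d : ℚ) * (d : ℚ) = 1 := by
      have h14 := congrArg (Int.cast : ℤ → ℚ) hdd
      push_cast at h14
      exact h14
    calc x j0 = (d : ℚ) * ((d : ℚ) * x j0) := by rw [← mul_assoc, hdd', one_mul]
      _ = (d : ℚ) * ((w (e0.symm ⟨j0, hj0'⟩) : ℚ)) := by rw [h13]
      _ = ((d * w (e0.symm ⟨j0, hj0'⟩) : ℤ) : ℚ) := by push_cast; ring
  · -- columns dependent: build g
    rw [Fintype.linearIndependent_iff] at hdep
    push_neg at hdep
    obtain ⟨c, hc0, k0, hk0⟩ := hdep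
    refine ⟨fun j => if h : j ∈ S then c (e0.symm ⟨j, h⟩) else 0, ?_, ?_, ?_⟩
    · intro hzero
      apply hk0
      have := congrFun hzero (e k0)
      simpa [e, he_mem k0] using this
    · intro j hj
      have hjS : j ∉ S := fun h => h hj
      simp [hjS]
    · funext i
      have hcol : ∑ l, c l * Q i (e l) = 0 := by
        have h4 := congrFun hc0 i
        simpa [Finset.sum_apply, Matrix.transpose_apply, Matrix.submatrix_apply] using h4
      have key : ∀ k : Fin s, (e0.symm ⟨e k, he_mem k⟩) = k := by
        intro k
        have h5 : (⟨e k, he_mem k⟩ : S) = e0 k := Subtype.ext rfl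
        rw [h5, Equiv.symm_apply_apply]
      simp only [Matrix.mulVec, dotProduct, Pi.zero_apply]
      rw [← Finset.sum_subset (Finset.subset_univ (Finset.univ.image e))]
      · rw [Finset.sum_image (fun a _ b _ h => he_inj h)]
        rw [← hcol]
        apply Finset.sum_congr rfl
        intro k _
        rw [dif_pos (he_mem k), key k, mul_comm]
      · intro j _ hj
        have hjS : j ∉ S := by
          intro hjS'
          exact hj (Finset.mem_image.mpr ⟨e0.symm ⟨j, hjS'⟩, Finset.mem_univ _, by
            simp [e, Equiv.apply_symm_apply]⟩)
        rw [dif_neg hjS, mul_zero]
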